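/- The function ψ(z¹, z²) = (z¹ + z² + 2 z¹z²)/(2 + z¹ + z²) is analytic on 𝔻², satisfies |ψ| < 1 on 𝔻², satisfies |ψ(z)| = 1 for z ∈ 𝕋² with 2 + z¹ + z² ≠ 0, and interpolates ψ(0,0) = 0, ψ(r,0) = r/(2+r), ψ(0,r) = r/(2+r) for r ∈ (0,1). -/

import Mathlib

lemma psi_normSq_key (a b : ℂ) :
    Complex.normSq (2 + a + b) - Complex.normSq (a + b + 2 * a * b) =
      4 * ((1 - Complex.normSq a * Complex.normSq b)
        + a.re * (1 - Complex.normSq b) + b.re * (1 - Complex.normSq a)) := by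
  simp [Complex.normSq_apply, Complex.add_re, Complex.add_im, Complex.mul_re, Complex.mul_im]
  ring

lemma psi_den_ne (a b : ℂ) (ha : ‖a‖ < 1) (hb : ‖b‖ < 1) :
    2 + a + b ≠ 0 := by
  intro h
  have hab : a + b = -2 := by linear_combination h
  have : ‖a + b‖ = 2 := by rw [hab]; simp
  have := norm_add_le a b
  linarith

/-- The function `ψ(z¹,z²) = (z¹ + z² + 2z¹z²)/(2 + z¹ + z²)` is analytic on the bidisk,
has modulus less than one there, modulus one on the torus off the denominator's zero set,
and interpolates `(0,0) ↦ 0`, `(r,0) ↦ r/(2+r)`, `(0,r) ↦ r/(2+r)`. -/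
theorem psi_inner_on_bidisk :
    AnalyticOnNhd ℂ (fun z : ℂ × ℂ => (z.1 + z.2 + 2 * z.1 * z.2) / (2 + z.1 + z.2))
      {z : ℂ × ℂ | ‖z.1‖ < 1 ∧ ‖z.2‖ < 1} ∧
    (∀ z : ℂ × ℂ, ‖z.1‖ < 1 → ‖z.2‖ < 1 →
      ‖(z.1 + z.2 + 2 * z.1 * z.2) / (2 + z.1 + z.2)‖ < 1) ∧
    (∀ z : ℂ × ℂ, ‖z.1‖ = 1 → ‖z.2‖ = 1 → 2 + z.1 + z.2 ≠ 0 →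
      ‖(z.1 + z.2 + 2 * z.1 * z.2) / (2 + z.1 + z.2)‖ = 1) ∧
    (∀ r : ℝ, 0 < r → r < 1 →
      ((0 : ℂ) + 0 + 2 * 0 * 0) / (2 + 0 + 0) = 0 ∧
      ((r : ℂ) + 0 + 2 * r * 0) / (2 + r + 0) = (r : ℂ) / (2 + r) ∧
      ((0 : ℂ) + r + 2 * 0 * r) / (2 + 0 + r) = (r : ℂ) / (2 + r)) := by
  have hfst : AnalyticOnNhd ℂ (fun z : ℂ × ℂ => z.1) Set.univ :=
    (ContinuousLinearMap.fst ℂ ℂ ℂ).analyticOnNhd _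
  have hsnd : AnalyticOnNhd ℂ (fun z : ℂ × ℂ => z.2) Set.univ :=
    (ContinuousLinearMap.snd ℂ ℂ ℂ).analyticOnNhd _
  refine ⟨?_, ?_, ?_, ?_⟩
  · apply AnalyticOnNhd.div
    · exact ((hfst.mono (Set.subset_univ _)).add (hsnd.mono (Set.subset_univ _))).add
        (((analyticOnNhd_const.mul (hfst.mono (Set.subset_univ _)))).mul
          (hsnd.mono (Set.subset_univ _)))
    · exact (analyticOnNhd_const.add (hfst.mono (Set.subset_univ _))).add
        (hsnd.mono (Set.subset_univ _))
    · rintro ⟨a, b⟩ ⟨ha, hb⟩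
      exact psi_den_ne a b ha hb
  · rintro ⟨a, b⟩ ha hb
    simp only at ha hb ⊢
    have hden := psi_den_ne a b ha hb
    have hdenpos : 0 < ‖2 + a + b‖ := by
      simpa [norm_pos_iff] using hden
    rw [norm_div, div_lt_one hdenpos]
    have key := psi_normSq_key a b
    have hxa : a.re ≥ -‖a‖ := neg_abs_le a.re |>.trans' (by
      simpa using neg_le_neg (Complex.abs_re_le_norm a))
    have hxb : b.re ≥ -‖b‖ := neg_abs_le b.re |>.trans' (by
      simpa using neg_le_neg (Complex.abs_re_le_norm b))
    have hna : Complex.normSq a = ‖a‖ ^ 2 := (Complex.sq_norm a).symm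
    have hnb : Complex.normSq b = ‖b‖ ^ 2 := (Complex.sq_norm b).symm
    have h0a : 0 ≤ ‖a‖ := norm_nonneg a
    have h0b : 0 ≤ ‖b‖ := norm_nonneg b
    have hD : Complex.normSq (a + b + 2 * a * b) < Complex.normSq (2 + a + b) := by
      nlinarith [mul_nonneg (by linarith : (0:ℝ) ≤ a.re + ‖a‖)
          (by nlinarith : (0:ℝ) ≤ 1 - ‖b‖ ^ 2),
        mul_nonneg (by linarith : (0:ℝ) ≤ b.re + ‖b‖)
          (by nlinarith : (0:ℝ) ≤ 1 - ‖a‖ ^ 2),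
        mul_pos (mul_pos (by linarith : (0:ℝ) < 1 - ‖a‖)
          (by linarith : (0:ℝ) < 1 - ‖b‖))
          (by nlinarith : (0:ℝ) < 1 - ‖a‖ * ‖b‖)]
    have := (Real.sqrt_lt_sqrt (Complex.normSq_nonneg _) hD)
    simpa [Complex.norm_def] using this
  · rintro ⟨a, b⟩ ha hb hden
    simp only at ha hb hden ⊢
    have hna : Complex.normSq a = 1 := by
      rw [← Complex.sq_norm, ha]; norm_num
    have hnb : Complex.normSq b = 1 := by
      rw [← Complex.sq_norm, hb]; norm_num
    have key := psi_normSq_key a b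
    rw [hna, hnb] at key
    have heq : Complex.normSq (a + b + 2 * a * b) = Complex.normSq (2 + a + b) := by
      nlinarith
    have habs : ‖a + b + 2 * a * b‖ = ‖2 + a + b‖ := by
      simp only [Complex.norm_def, heq]
    rw [norm_div, habs, div_self]
    simpa [norm_ne_zero_iff] using hden
  · intro r hr0 hr1
    have h2r : (2 : ℂ) + r ≠ 0 := by
      intro h
      have : (r : ℂ) = -2 := by linear_combination h
      have := congrArg Complex.re this
      simp at this; linarith
    refine ⟨by norm_num, by ring_nf, by ring_nf⟩
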